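/- Let X : ℝ → ℝ be twice continuously differentiable with X(x₀) = 0, X′(x₀) = 0 and X″(x₀) > 0. Then the equilibrium x₀ of the second-order equation x″ = ½ X′(x) is unstable: there exists ε > 0 such that for every δ > 0 there is a solution with |x(0) − x₀| < δ and |x′(0)| < δ whose trajectory reaches some time t > 0 (within its interval of existence) with |x(t) − x₀| ≥ ε. -/

import Mathlib

open Set Filter intervalIntegral Topology

/-- Instability of a regular precession: if `X` is `C²` with `X(x₀) = X′(x₀) = 0` and
`X″(x₀) > 0`, then the equilibrium `x₀` of `x″ = ½X′(x)` is unstable: there is `ε > 0`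
such that arbitrarily close to `(x₀, 0)` there start solutions which reach distance at
least `ε` from `x₀` at some positive time within their interval of existence. -/
theorem regular_precession_unstable
    (X : ℝ → ℝ) (x₀ : ℝ) (hX : ContDiff ℝ 2 X)
    (h0 : X x₀ = 0) (h1 : deriv X x₀ = 0) (h2 : 0 < deriv (deriv X) x₀) :
    ∃ ε > 0, ∀ δ > 0, ∃ (x v : ℝ → ℝ) (T : ℝ), 0 < T ∧
      (∀ t ∈ Set.Icc (0 : ℝ) T,
        HasDerivAt x (v t) t ∧ HasDerivAt v (deriv X (x t) / 2) t) ∧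
      |x 0 - x₀| < δ ∧ |v 0| < δ ∧ ε ≤ |x T - x₀| := by
  classical
  -- X is differentiable and deriv X is C¹
  have hXdiff : Differentiable ℝ X := hX.differentiable (by simp)
  have hd2 : ContDiff ℝ 1 (deriv X) := by
    rw [show (2 : WithTop ℕ∞) = 1 + 1 by norm_num] at hX
    exact (contDiff_succ_iff_deriv.mp hX).2.2
  have hdd : HasDerivAt (deriv X) (deriv (deriv X) x₀) x₀ :=
    ((hd2.differentiable one_ne_zero) x₀).hasDerivAt
  rw [hasDerivAt_iff_tendsto_slope] at hdd
  have hslope : ∀ᶠ y in 𝓝[≠] x₀, 0 < slope (deriv X) x₀ y :=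
    hdd.eventually (eventually_gt_nhds h2)
  obtain ⟨r, hr, hball⟩ : ∃ r > 0, ∀ y, y ≠ x₀ → |y - x₀| < r →
      0 < slope (deriv X) x₀ y := by
    rw [eventually_nhdsWithin_iff, Metric.eventually_nhds_iff] at hslope
    obtain ⟨r, hr, h⟩ := hslope
    exact ⟨r, hr, fun y hy1 hy2 => h (by rwa [Real.dist_eq]) hy1⟩
  -- derivative sign near x₀
  have hpos : ∀ y ∈ Set.Ioo x₀ (x₀ + r), 0 < deriv X y := by
    intro y hy
    obtain ⟨hy1, hy2⟩ := hy
    have h := hball y (ne_of_gt hy1) (by rw [abs_of_pos (by linarith)]; linarith)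
    rw [slope_def_field, h1, sub_zero] at h
    rcases div_pos_iff.mp h with ⟨h', _⟩ | ⟨_, h'⟩
    · exact h'
    · linarith
  have hneg : ∀ y ∈ Set.Ioo (x₀ - r) x₀, deriv X y < 0 := by
    intro y hy
    obtain ⟨hy1, hy2⟩ := hy
    have h := hball y (ne_of_lt hy2) (by rw [abs_of_neg (by linarith)]; linarith)
    rw [slope_def_field, h1, sub_zero] at h
    rcases div_pos_iff.mp h with ⟨_, h'⟩ | ⟨h', _⟩
    · linarith
    · exact h'
  -- X is nonnegative near x₀
  have hXnonneg : ∀ y ∈ Set.Icc (x₀ - r) (x₀ + r), 0 ≤ X y := by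
    have hmonoR : StrictMonoOn X (Set.Icc x₀ (x₀ + r)) :=
      strictMonoOn_of_deriv_pos (convex_Icc _ _) hX.continuous.continuousOn
        (by rw [interior_Icc]; exact hpos)
    have hantiL : StrictAntiOn X (Set.Icc (x₀ - r) x₀) :=
      strictAntiOn_of_deriv_neg (convex_Icc _ _) hX.continuous.continuousOn
        (by rw [interior_Icc]; exact hneg)
    intro y hy
    rcases le_total y x₀ with h | h
    · rcases eq_or_lt_of_le h with he | hl
      · rw [he, h0]
      · have := hantiL ⟨hy.1, h⟩ ⟨by linarith, le_refl x₀⟩ hl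
        rw [h0] at this; linarith
    · rcases eq_or_lt_of_le h with he | hl
      · rw [← he, h0]
      · have := hmonoR ⟨le_refl x₀, by linarith⟩ ⟨h, hy.2⟩ hl
        rw [h0] at this; linarith
  refine ⟨r / 2, by linarith, fun δ hδ => ?_⟩
  set c : ℝ := (δ / 2) ^ 2 with hc_def
  have hc : 0 < c := by positivity
  set I : Set ℝ := Set.Ioo (x₀ - r) (x₀ + r) with hI_def
  have hXc : ∀ y ∈ I, 0 < X y + c := fun y hy => by
    have := hXnonneg y ⟨le_of_lt hy.1, le_of_lt hy.2⟩; linarith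
  set f : ℝ → ℝ := fun s => (Real.sqrt (X s + c))⁻¹ with hf_def
  have hfpos : ∀ y ∈ I, 0 < f y := fun y hy =>
    inv_pos.mpr (Real.sqrt_pos.mpr (hXc y hy))
  have hfcont : ContinuousOn f I := by
    intro y hy
    exact (((hX.continuous.continuousAt.add continuousAt_const).sqrt).inv₀
      (ne_of_gt (Real.sqrt_pos.mpr (hXc y hy)))).continuousWithinAt
  set F : ℝ → ℝ := fun y => ∫ s in x₀..y, f s with hF_def
  have hx₀I : x₀ ∈ I := by
    rw [hI_def]
    exact Set.mem_Ioo.mpr ⟨by linarith, by linarith⟩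
  have hFderiv : ∀ y ∈ I, HasDerivAt F (f y) y := by
    intro y hy
    have huIcc : Set.uIcc x₀ y ⊆ I := Set.ordConnected_Ioo.uIcc_subset hx₀I hy
    refine intervalIntegral.integral_hasDerivAt_right
      ((hfcont.mono huIcc).intervalIntegrable) ?_
      ((hfcont y hy).continuousAt (isOpen_Ioo.mem_nhds hy))
    exact hfcont.stronglyMeasurableAtFilter isOpen_Ioo y hy
  have hFcont : ContinuousOn F I := fun y hy =>
    (hFderiv y hy).continuousAt.continuousWithinAt
  have hFmono : StrictMonoOn F I := by
    refine strictMonoOn_of_deriv_pos (convex_Ioo _ _) hFcont ?_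
    intro y hy
    rw [isOpen_Ioo.interior_eq] at hy
    rw [(hFderiv y hy).deriv]
    exact hfpos y hy
  -- extend F to a global strictly monotone surjection G
  set a : ℝ := x₀ - 3 * r / 4 with ha_def
  set b : ℝ := x₀ + 3 * r / 4 with hb_def
  have hab : a ≤ b := by rw [ha_def, hb_def]; linarith
  set clamp : ℝ → ℝ := fun y => min b (max a y) with hclamp_def
  have hclamp_mem : ∀ y, clamp y ∈ Set.Icc a b := fun y =>
    ⟨le_min hab (le_max_left a y), min_le_left _ _⟩
  have hIccI : Set.Icc a b ⊆ I := by
    rw [hI_def]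
    intro y hy
    obtain ⟨hy1, hy2⟩ := hy
    rw [ha_def] at hy1
    rw [hb_def] at hy2
    exact Set.mem_Ioo.mpr ⟨by linarith, by linarith⟩
  have hclamp_mono : Monotone clamp := fun y z h =>
    min_le_min le_rfl (max_le_max le_rfl h)
  have hclamp_lip : ∀ y z, y ≤ z → clamp z - clamp y ≤ z - y := by
    intro y z h
    rw [hclamp_def]
    simp only [min_def, max_def]
    split_ifs <;> linarith
  have hclamp_id : ∀ y ∈ Set.Icc a b, clamp y = y := by
    intro y hy
    rw [hclamp_def]
    simp only
    rw [max_eq_right hy.1, min_eq_right hy.2]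
  set G : ℝ → ℝ := fun y => F (clamp y) + (y - clamp y) with hG_def
  have hGF : ∀ y ∈ Set.Ioo a b, G y = F y := by
    intro y hy
    rw [hG_def]
    simp only
    rw [hclamp_id y ⟨le_of_lt hy.1, le_of_lt hy.2⟩]
    ring
  have hGmono : StrictMono G := by
    intro y z hyz
    have h1 : clamp y ≤ clamp z := hclamp_mono (le_of_lt hyz)
    rcases eq_or_lt_of_le h1 with he | hl
    · simp only [hG_def]
      rw [he]
      linarith
    · have hF : F (clamp y) < F (clamp z) :=
        hFmono (hIccI (hclamp_mem y)) (hIccI (hclamp_mem z)) hl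
      have hd := hclamp_lip y z (le_of_lt hyz)
      simp only [hG_def]
      linarith
  have hclamp_cont : Continuous clamp :=
    continuous_const.min (continuous_const.max continuous_id)
  have hGcont : Continuous G := by
    have hc1 : Continuous fun y => F (clamp y) := by
      rw [continuous_iff_continuousAt]
      intro y
      exact ((hFderiv (clamp y)
        (hIccI (hclamp_mem y))).differentiableAt.continuousAt).comp
        hclamp_cont.continuousAt
    exact hc1.add (continuous_id.sub hclamp_cont)
  have hGtop : Tendsto G atTop atTop := by
    have hev : (fun y => F b + (y - b)) =ᶠ[atTop] G := by
      filter_upwards [eventually_ge_atTop b] with y hy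
      have hcy : clamp y = b := by
        rw [hclamp_def]
        simp only
        rw [max_eq_right (le_trans hab hy), min_eq_left hy]
      rw [hG_def]
      simp only [hcy]
    refine Tendsto.congr' hev ?_
    exact tendsto_atTop_add_const_left _ _ (tendsto_atTop_add_const_right _ _ tendsto_id)
  have hGbot : Tendsto G atBot atBot := by
    have hev : (fun y => F a + (y - a)) =ᶠ[atBot] G := by
      filter_upwards [eventually_le_atBot a] with y hy
      have hcy : clamp y = a := by
        rw [hclamp_def]
        simp only
        rw [max_eq_left hy, min_eq_right hab]
      rw [hG_def]
      simp only [hcy]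
    refine Tendsto.congr' hev ?_
    exact tendsto_atBot_add_const_left _ _ (tendsto_atBot_add_const_right _ _ tendsto_id)
  have hGsurj : Function.Surjective G := hGcont.surjective hGtop hGbot
  set e := StrictMono.orderIsoOfSurjective G hGmono hGsurj with he_def
  set x : ℝ → ℝ := fun t => e.symm t with hx_def
  have hxG : ∀ y, G (x y) = y := fun y => e.apply_symm_apply y
  have hxsymm : ∀ y, x (G y) = y := fun y => e.symm_apply_apply y
  have hG0 : G x₀ = 0 := by
    rw [hG_def]
    simp only
    rw [hclamp_id x₀ ⟨by rw [ha_def]; linarith, by rw [hb_def]; linarith⟩, hF_def]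
    simp
  set T := G (x₀ + r / 2) with hT_def
  have hT : 0 < T := by
    have h := hGmono (show x₀ < x₀ + r / 2 by linarith)
    rw [hG0] at h
    exact h
  have hxcont : Continuous x := e.symm.continuous
  have hx0 : x 0 = x₀ := by rw [← hG0]; exact hxsymm x₀
  have hxT : x T = x₀ + r / 2 := by rw [hT_def]; exact hxsymm _
  have hxmem : ∀ t ∈ Set.Icc (0 : ℝ) T, x t ∈ Set.Icc x₀ (x₀ + r / 2) := by
    intro t ht
    constructor
    · rw [← hx0]; exact e.symm.monotone ht.1
    · rw [← hxT]; exact e.symm.monotone ht.2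
  have hmidab : Set.Icc x₀ (x₀ + r / 2) ⊆ Set.Ioo a b := by
    intro y hy
    obtain ⟨hy1, hy2⟩ := hy
    exact Set.mem_Ioo.mpr ⟨by rw [ha_def]; linarith, by rw [hb_def]; linarith⟩
  set v : ℝ → ℝ := fun t => Real.sqrt (X (x t) + c) with hv_def
  have hmain : ∀ t ∈ Set.Icc (0 : ℝ) T,
      HasDerivAt x (v t) t ∧ HasDerivAt v (deriv X (x t) / 2) t := by
    intro t ht
    have hyab : x t ∈ Set.Ioo a b := hmidab (hxmem t ht)
    have hyI : x t ∈ I := hIccI ⟨le_of_lt hyab.1, le_of_lt hyab.2⟩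
    have hGd : HasDerivAt G (f (x t)) (x t) :=
      (hFderiv (x t) hyI).congr_of_eventuallyEq
        (Filter.eventuallyEq_of_mem (Ioo_mem_nhds hyab.1 hyab.2) hGF)
    have hfx : 0 < f (x t) := hfpos _ hyI
    have hxd0 : HasDerivAt x (f (x t))⁻¹ t :=
      HasDerivAt.of_local_left_inverse hxcont.continuousAt hGd (ne_of_gt hfx)
        (Filter.Eventually.of_forall hxG)
    have hux : 0 < X (x t) + c := hXc _ hyI
    have hveq : (f (x t))⁻¹ = v t := by
      rw [hf_def]
      simp only
      rw [inv_inv]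
    have hxd : HasDerivAt x (v t) t := hveq ▸ hxd0
    refine ⟨hxd, ?_⟩
    have hu : HasDerivAt (fun s => X (x s) + c) (deriv X (x t) * v t) t :=
      (((hXdiff (x t)).hasDerivAt.comp t hxd)).add_const c
    have hsq : HasDerivAt Real.sqrt (1 / (2 * Real.sqrt (X (x t) + c))) (X (x t) + c) :=
      Real.hasDerivAt_sqrt (ne_of_gt hux)
    have hvpos : 0 < v t := Real.sqrt_pos.mpr hux
    have hvd := hsq.comp t hu
    have hsimp : 1 / (2 * Real.sqrt (X (x t) + c)) * (deriv X (x t) * v t)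
        = deriv X (x t) / 2 := by
      have : Real.sqrt (X (x t) + c) = v t := rfl
      rw [this]
      field_simp
    rw [hsimp] at hvd
    exact hvd
  refine ⟨x, v, T, hT, hmain, ?_, ?_, ?_⟩
  · rw [hx0]
    simpa using hδ
  · have hv0 : v 0 = δ / 2 := by
      rw [hv_def]
      simp only
      rw [hx0, h0, zero_add, hc_def, Real.sqrt_sq (by linarith)]
    rw [hv0, abs_of_pos (by linarith)]
    linarith
  · rw [hxT]
    have : x₀ + r / 2 - x₀ = r / 2 := by ring
    rw [this, abs_of_pos (by linarith)]
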